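/- Let k be a field of characteristic p > 0 and let b, s, t be integers with 0 ≤ b ≤ t, 1 ≤ s, and t + s ≤ p. Then the determinant of the s×s matrix with (i,j) entry C(t, b+i-j), reduced modulo p, is a nonzero element of k. -/
import Mathlib

open Finset

/-- The Toeplitz matrix `M_{t,b,s,s}` of binomial coefficients over a commutative ring `K`,
with `(i,j)` entry `C(t, b+i-j)` reduced to `K` (interpreted as `0` when `b+i-j < 0`). -/
noncomputable def toeplitzBinomK (K : Type*) [CommRing K] (t b s : ℕ) :
    Matrix (Fin s) (Fin s) K :=
  Matrix.of fun i j : Fin s =>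
    if (j : ℕ) ≤ b + (i : ℕ) then (t.choose (b + (i : ℕ) - (j : ℕ)) : K) else 0

open Polynomial

lemma binom_root_key (K : Type*) [Field K] (p : ℕ) [CharP K p] :
    ∀ N (f : K[X]), f.natDegree ≤ N → f ≠ 0 → f.natDegree < p →
      ∀ t, (X + 1) ^ t ∣ f → t + 1 ≤ f.support.card := by
  intro N
  induction N with
  | zero =>
    intro f hN hf hdeg t hdvd
    -- f is a nonzero constant
    rcases t with _ | t
    · simpa [Nat.succ_le_iff, Finset.card_pos, Polynomial.support_nonempty] using hf
    · exfalso
      have h1 : ((X : K[X]) + 1) ^ (t+1) ∣ f := hdvd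
      have hX1 : ((X : K[X]) + 1).natDegree = 1 := by
        simpa using Polynomial.natDegree_X_add_C (1:K)
      have hd : (t+1 : ℕ) ≤ f.natDegree := by
        have := Polynomial.natDegree_le_of_dvd h1 hf
        simpa [Polynomial.natDegree_pow, hX1] using this
      omega
  | succ N ih =>
    intro f hN hf hdeg t hdvd
    rcases t with _ | t
    · simpa [Nat.succ_le_iff, Finset.card_pos, Polynomial.support_nonempty] using hf
    by_cases h0 : f.coeff 0 = 0
    · -- X ∣ f
      obtain ⟨g, hg⟩ : (X : K[X]) ∣ f := by
        rwa [Polynomial.X_dvd_iff]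
      have hg0 : g ≠ 0 := by rintro rfl; simp at hg; exact hf hg
      have hcop : IsCoprime ((X : K[X]) + 1) X := by
        exact ⟨1, -1, by ring⟩
      have hdvdg : ((X : K[X]) + 1) ^ (t+1) ∣ g := by
        exact (IsCoprime.pow_left hcop).dvd_of_dvd_mul_left (hg ▸ hdvd)
      have hdegf : f.natDegree = g.natDegree + 1 := by
        rw [hg, Polynomial.natDegree_X_mul hg0]
      have hsupp : (X * g).support = g.support.image (· + 1) := by
        ext n
        rcases n with _ | n
        · simp [Polynomial.coeff_X_mul_zero]
        · simp [Polynomial.coeff_X_mul]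
      have hcard : g.support.card = f.support.card := by
        rw [hg, hsupp, Finset.card_image_of_injective _ (add_left_injective 1)]
      rw [← hcard]
      exact ih g (by omega) hg0 (by omega) (t+1) hdvdg
    · -- derivative case
      have hX1 : ((X : K[X]) + 1).natDegree = 1 := by
        simpa using Polynomial.natDegree_X_add_C (1:K)
      have hd1 : (1:ℕ) ≤ f.natDegree := by
        have := Polynomial.natDegree_le_of_dvd hdvd hf
        simp [Polynomial.natDegree_pow, hX1] at this
        omega
      set d := Polynomial.derivative f with hdd
      have hddvd : ((X : K[X]) + 1) ^ t ∣ d := by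
        obtain ⟨q, hq⟩ := hdvd
        refine ⟨(t+1 : K[X]) * q + (X + 1) * Polynomial.derivative q, ?_⟩
        rw [hdd, hq, Polynomial.derivative_mul, Polynomial.derivative_pow]
        simp only [Polynomial.derivative_add, Polynomial.derivative_X, Polynomial.derivative_one,
          add_zero, mul_one, Nat.cast_add, Nat.cast_one, Nat.add_sub_cancel, map_add,
          Polynomial.C_1, Polynomial.C_eq_natCast]
        ring
      have hdne : d ≠ 0 := by
        have : d.coeff (f.natDegree - 1) ≠ 0 := by
          rw [hdd, Polynomial.coeff_derivative]
          have heq : f.natDegree - 1 + 1 = f.natDegree := by omega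
          rw [heq]
          have h1 : f.coeff f.natDegree ≠ 0 := Polynomial.leadingCoeff_ne_zero.mpr hf
          have h2 : ((f.natDegree - 1 + 1 : ℕ) : K) ≠ 0 := by
            rw [heq, Ne, CharP.cast_eq_zero_iff K p]
            intro hdvdp
            rcases hdvdp with ⟨c, hc⟩
            rcases c with _ | c
            · omega
            · have : p ≤ f.natDegree := by
                rw [hc]; nlinarith
              omega
          push_cast
          push_cast at h2
          exact mul_ne_zero h1 h2
        intro h; rw [h] at this; simp at this
      have hdlt : d.natDegree < f.natDegree := Polynomial.natDegree_derivative_lt (by omega)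
      have hih := ih d (by omega) hdne (by omega) t hddvd
      -- card d.support + 1 ≤ card f.support
      have hsub : d.support ⊆ (f.support.erase 0).image (· - 1) := by
        intro n hn
        rw [Polynomial.mem_support_iff, hdd, Polynomial.coeff_derivative] at hn
        have : f.coeff (n+1) ≠ 0 := fun h => hn (by simp [h])
        refine Finset.mem_image.mpr ⟨n+1, Finset.mem_erase.mpr ⟨by omega, Polynomial.mem_support_iff.mpr this⟩, by omega⟩
      have h0mem : (0:ℕ) ∈ f.support := Polynomial.mem_support_iff.mpr h0
      have : d.support.card ≤ f.support.card - 1 := by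
        calc d.support.card ≤ ((f.support.erase 0).image (· - 1)).card := Finset.card_le_card hsub
          _ ≤ (f.support.erase 0).card := Finset.card_image_le
          _ = f.support.card - 1 := Finset.card_erase_of_mem h0mem
      have hpos : 1 ≤ f.support.card := Finset.card_pos.mpr ⟨0, h0mem⟩
      omega


theorem stmt1 (K : Type*) [Field K] (p : ℕ) [CharP K p] (hp : 0 < p)
    (t b s : ℕ) (hb : b ≤ t) (hs : 1 ≤ s) (hts : t + s ≤ p) :
    (toeplitzBinomK K t b s).det ≠ 0 := by
  have key : ∀ (f : K[X]), f ≠ 0 → f.natDegree < p →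
      ∀ u, (X + 1) ^ u ∣ f → u + 1 ≤ f.support.card :=
    fun f hf hd u hdvd => binom_root_key K p f.natDegree f le_rfl hf hd u hdvd
  rw [toeplitzBinomK]

  intro hdet
  obtain ⟨v, hv, hmv⟩ := (Matrix.exists_mulVec_eq_zero_iff).mpr hdet
  set q : K[X] := ∑ j : Fin s, Polynomial.C (v j) * X ^ (j:ℕ) with hqdef
  have hqcoeff : ∀ j : Fin s, q.coeff (j:ℕ) = v j := by
    intro j0
    rw [hqdef, Polynomial.finset_sum_coeff]
    rw [Finset.sum_eq_single j0]
    · simp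
    · intro j _ hne
      have : (j:ℕ) ≠ (j0:ℕ) := fun h => hne (Fin.ext h)
      simp only [Polynomial.coeff_C_mul, Polynomial.coeff_X_pow]
      rw [if_neg (fun h => this h.symm), mul_zero]
    · simp
  have hq0 : q ≠ 0 := by
    obtain ⟨j, hj⟩ := Function.ne_iff.mp hv
    intro h
    exact hj (by rw [← hqcoeff j, h]; simp)
  have hqdeg : q.natDegree ≤ s - 1 := by
    apply Polynomial.natDegree_sum_le_of_forall_le
    intro j _
    exact le_trans (Polynomial.natDegree_C_mul_X_pow_le _ _) (by omega)
  have hX1 : ((X : K[X]) + 1).natDegree = 1 := by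
    simpa using Polynomial.natDegree_X_add_C (1:K)
  set f : K[X] := (X + 1) ^ t * q with hfdef
  have hXt0 : ((X : K[X]) + 1) ^ t ≠ 0 := pow_ne_zero _ (by
    intro h
    have := congrArg (Polynomial.natDegree) h
    simp [hX1] at this)
  have hf0 : f ≠ 0 := mul_ne_zero hXt0 hq0
  have hfdeg : f.natDegree ≤ t + (s - 1) := by
    rw [hfdef, Polynomial.natDegree_mul hXt0 hq0, Polynomial.natDegree_pow, hX1, mul_one]
    omega
  have hcoeffmid : ∀ i : Fin s, f.coeff (b + (i:ℕ)) = 0 := by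
    intro i
    have hmvi : ∑ j : Fin s, (if (j:ℕ) ≤ b + (i:ℕ) then ((t.choose (b + (i:ℕ) - (j:ℕ)) : K)) else 0) * v j = 0 := by
      have := congrFun hmv i
      simpa [toeplitzBinomK, Matrix.mulVec, dotProduct] using this
    rw [hfdef, hqdef, Finset.mul_sum, Polynomial.finset_sum_coeff]
    rw [← hmvi]
    apply Finset.sum_congr rfl
    intro j _
    have : ((X:K[X]) + 1) ^ t * (Polynomial.C (v j) * X ^ (j:ℕ))
        = (Polynomial.C (v j) * ((X:K[X]) + 1) ^ t) * X ^ (j:ℕ) := by ring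
    rw [this, Polynomial.coeff_mul_X_pow']
    split_ifs with h
    · rw [Polynomial.coeff_C_mul, Polynomial.coeff_X_add_one_pow]
      ring
    · ring
  have hsupp : f.support ⊆ (Finset.range (t+s)) \ (Finset.Ico b (b+s)) := by
    intro n hn
    rw [Polynomial.mem_support_iff] at hn
    rw [Finset.mem_sdiff, Finset.mem_range, Finset.mem_Ico]
    constructor
    · by_contra h
      exact hn (Polynomial.coeff_eq_zero_of_natDegree_lt (by omega))
    · rintro ⟨h1, h2⟩
      have h3 := hcoeffmid ⟨n - b, by omega⟩
      simp only [Fin.val_mk] at h3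
      rw [Nat.add_sub_cancel' h1] at h3
      exact hn h3
  have hcard : f.support.card ≤ t := by
    calc f.support.card ≤ ((Finset.range (t+s)) \ (Finset.Ico b (b+s))).card :=
          Finset.card_le_card hsupp
      _ = (t+s) - s := by
          rw [Finset.card_sdiff_of_subset (by
            intro x hx
            rw [Finset.mem_Ico] at hx
            rw [Finset.mem_range]
            omega)]
          simp [Nat.card_Ico]
      _ = t := by omega
  have := key f hf0 (by omega) t ⟨q, rfl⟩
  omega
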